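/- Let n ≥ 2, let Ω ∈ ℝⁿ be a unit vector, let φ : [−1,1] → ℝ be bounded and measurable, write P := Id − Ω⊗Ω and u_⊥ := u − (u·Ω)Ω, and set C_S := (1/((n−1)(n+1))) ∫_{S^{n−1}} φ(u·Ω)(1 − (u·Ω)²)² dσ(u). Then for all indices i, j, k, l ∈ {1,…,n}: ∫_{S^{n−1}} φ(u·Ω) (u_⊥)_i (u_⊥)_j (u_⊥)_k (u_⊥)_l dσ(u) = C_S ( P_{ij}P_{kl} + P_{ik}P_{jl} + P_{il}P_{jk} ). -/

import Mathlib

open MeasureTheory Metric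
open scoped RealInnerProductSpace

/-- The image of a point of the unit sphere of `ℝⁿ` under a linear isometry. -/
noncomputable def sphereMap {n : ℕ}
    (e : EuclideanSpace ℝ (Fin n) ≃ₗᵢ[ℝ] EuclideanSpace ℝ (Fin n))
    (u : sphere (0 : EuclideanSpace ℝ (Fin n)) 1) :
    sphere (0 : EuclideanSpace ℝ (Fin n)) 1 :=
  ⟨e u, by
    rw [mem_sphere_zero_iff_norm, e.norm_map]
    exact mem_sphere_zero_iff_norm.mp u.2⟩

/-- A measure on the unit sphere of `ℝⁿ` is rotation invariant if it is invariant under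
every linear isometry of `ℝⁿ`. -/
def RotationInvariant {n : ℕ} (σ : Measure (sphere (0 : EuclideanSpace ℝ (Fin n)) 1)) :
    Prop :=
  ∀ e : EuclideanSpace ℝ (Fin n) ≃ₗᵢ[ℝ] EuclideanSpace ℝ (Fin n),
    σ.map (sphereMap e) = σ

/-- The `(i,j)` entry of the orthogonal projection matrix `P = Id − Ω⊗Ω` onto `Ω⊥`. -/
noncomputable def projEntry {n : ℕ} (Ω : EuclideanSpace ℝ (Fin n)) (i j : Fin n) : ℝ :=
  (if i = j then (1 : ℝ) else 0) - Ω i * Ω j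

variable {n : ℕ}

local notation "E" => EuclideanSpace ℝ (Fin n)
local notation "Sp" => sphere (0 : EuclideanSpace ℝ (Fin n)) 1



noncomputable def permIso (π : Equiv.Perm (Fin n)) : E ≃ₗᵢ[ℝ] E :=
  { toFun := fun x => WithLp.toLp 2 (fun i => x (π i)),
    invFun := fun x => WithLp.toLp 2 (fun i => x (π.symm i)),
    left_inv := fun x => PiLp.ext fun i => congrArg x.ofLp (π.apply_symm_apply i),
    right_inv := fun x => PiLp.ext fun i => congrArg x.ofLp (π.symm_apply_apply i),
    map_add' := fun x y => rfl, map_smul' := fun c x => rfl,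
    norm_map' := fun x => by
      rw [EuclideanSpace.norm_eq, EuclideanSpace.norm_eq]
      congr 1
      exact Equiv.sum_comp π fun i => ‖x i‖ ^ 2 }

@[simp] lemma permIso_apply (π : Equiv.Perm (Fin n)) (x : E) (i : Fin n) :
    permIso π x i = x (π i) := rfl

noncomputable def involIso (g : E → E)
    (hadd : ∀ x y, g (x + y) = g x + g y) (hsmul : ∀ (c : ℝ) x, g (c • x) = c • g x)
    (hi : ∀ x, g (g x) = x) (hnm : ∀ x, ‖g x‖ = ‖x‖) : E ≃ₗᵢ[ℝ] E :=
  { toFun := g, invFun := g, left_inv := hi, right_inv := hi,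
    map_add' := hadd, map_smul' := hsmul, norm_map' := hnm }

noncomputable def flipIso (t : Fin n) : E ≃ₗᵢ[ℝ] E :=
  involIso (fun x => WithLp.toLp 2 (fun i => if i = t then -x i else x i))
    (fun x y => PiLp.ext fun i => by by_cases h : i = t <;> simp [h] <;> ring_nf)
    (fun c x => PiLp.ext fun i => by by_cases h : i = t <;> simp [h] <;> ring_nf)
    (fun x => PiLp.ext fun i => by by_cases h : i = t <;> simp [h])
    (fun x => by
      rw [EuclideanSpace.norm_eq, EuclideanSpace.norm_eq]
      congr 1
      refine Finset.sum_congr rfl fun i _ => ?_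
      by_cases h : i = t <;> simp [h])

@[simp] lemma flipIso_apply (t : Fin n) (x : E) (i : Fin n) :
    flipIso t x i = if i = t then -x i else x i := rfl

noncomputable def rotFun (a b : Fin n) (x : E) : E := WithLp.toLp 2 fun i =>
  if i = a then (x a + x b) / Real.sqrt 2
  else if i = b then (x a - x b) / Real.sqrt 2 else x i

lemma rotFun_a (a b : Fin n) (x : E) : rotFun a b x a = (x a + x b) / Real.sqrt 2 := by
  simp [rotFun]

lemma rotFun_b (a b : Fin n) (hab : a ≠ b) (x : E) :
    rotFun a b x b = (x a - x b) / Real.sqrt 2 := by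
  simp [rotFun, hab.symm]

lemma rotFun_other (a b : Fin n) (x : E) {i : Fin n} (hia : i ≠ a) (hib : i ≠ b) :
    rotFun a b x i = x i := by
  simp [rotFun, hia, hib]

noncomputable def rotIso (a b : Fin n) (hab : a ≠ b) : E ≃ₗᵢ[ℝ] E := by
  have h2 : Real.sqrt 2 * Real.sqrt 2 = 2 := Real.mul_self_sqrt (by norm_num)
  have h0 : Real.sqrt 2 ≠ 0 := by positivity
  refine involIso (rotFun a b) ?_ ?_ ?_ ?_
  · intro x y; ext i
    show rotFun a b (x + y) i = rotFun a b x i + rotFun a b y i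
    by_cases h : i = a
    · rw [h]; rw [rotFun_a, rotFun_a, rotFun_a]
      show ((x + y) a + (x + y) b) / Real.sqrt 2 = _
      rw [show (x + y) a = x a + y a from rfl, show (x + y) b = x b + y b from rfl]; ring
    · by_cases h' : i = b
      · rw [h']; rw [rotFun_b _ _ hab, rotFun_b _ _ hab, rotFun_b _ _ hab]
        rw [show (x + y) a = x a + y a from rfl, show (x + y) b = x b + y b from rfl]; ring
      · rw [rotFun_other _ _ _ h h', rotFun_other _ _ _ h h', rotFun_other _ _ _ h h']; rfl
  · intro c x; ext i
    show rotFun a b (c • x) i = c * rotFun a b x i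
    by_cases h : i = a
    · rw [h]; rw [rotFun_a, rotFun_a,
        show (c • x) a = c * x a from rfl, show (c • x) b = c * x b from rfl]; ring
    · by_cases h' : i = b
      · rw [h']; rw [rotFun_b _ _ hab, rotFun_b _ _ hab,
          show (c • x) a = c * x a from rfl, show (c • x) b = c * x b from rfl]; ring
      · rw [rotFun_other _ _ _ h h', rotFun_other _ _ _ h h']; rfl
  · intro x; ext i
    show rotFun a b (rotFun a b x) i = x i
    by_cases h : i = a
    · rw [h]; rw [rotFun_a, rotFun_a, rotFun_b _ _ hab, ← add_div, div_div, h2]; ring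
    · by_cases h' : i = b
      · rw [h']; rw [rotFun_b _ _ hab, rotFun_a, rotFun_b _ _ hab, div_sub_div_same, div_div, h2]
        ring
      · rw [rotFun_other _ _ _ h h', rotFun_other _ _ _ h h']
  · intro x
    rw [EuclideanSpace.norm_eq, EuclideanSpace.norm_eq]
    congr 1
    rw [← Finset.sum_erase_add Finset.univ _ (Finset.mem_univ a),
        ← Finset.sum_erase_add Finset.univ _ (Finset.mem_univ a),
        ← Finset.sum_erase_add (Finset.univ.erase a) _
          (Finset.mem_erase.2 ⟨hab.symm, Finset.mem_univ b⟩),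
        ← Finset.sum_erase_add (Finset.univ.erase a) _
          (Finset.mem_erase.2 ⟨hab.symm, Finset.mem_univ b⟩)]
    have he : ∀ i ∈ (Finset.univ.erase a).erase b, ‖rotFun a b x i‖ ^ 2 = ‖x i‖ ^ 2 := by
      intro i hi
      have h1 := Finset.mem_erase.1 hi
      have h2 := Finset.mem_erase.1 h1.2
      rw [rotFun_other _ _ _ h2.1 h1.1]
    rw [Finset.sum_congr rfl he, rotFun_a, rotFun_b _ _ hab]
    have key : ‖(x a + x b) / Real.sqrt 2‖ ^ 2 + ‖(x a - x b) / Real.sqrt 2‖ ^ 2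
        = ‖x b‖ ^ 2 + ‖x a‖ ^ 2 := by
      simp only [Real.norm_eq_abs, sq_abs]
      rw [div_pow, div_pow, show Real.sqrt 2 ^ 2 = 2 by rw [sq, h2]]
      ring
    linarith [key]



lemma sphere_norm (u : Sp) : ‖(u : E)‖ = 1 := mem_sphere_zero_iff_norm.mp u.2

lemma coord_abs_le (x : E) (i : Fin n) : |x i| ≤ ‖x‖ := by
  rw [EuclideanSpace.norm_eq]
  have h1 : |x i| = Real.sqrt (‖x i‖ ^ 2) := by
    rw [Real.sqrt_sq_eq_abs, Real.norm_eq_abs, abs_abs]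
  rw [h1]
  exact Real.sqrt_le_sqrt (Finset.single_le_sum (f := fun j => ‖x j‖ ^ 2)
    (fun j _ => sq_nonneg _) (Finset.mem_univ i))

lemma integral_comp {σ : Measure Sp} (hinv : RotationInvariant σ)
    (e : E ≃ₗᵢ[ℝ] E) {f : E → ℝ} (hf : Measurable f) :
    ∫ u : Sp, f (e (u : E)) ∂σ = ∫ u : Sp, f (u : E) ∂σ := by
  conv_rhs => rw [← hinv e]
  have hc : Continuous (sphereMap e) :=
    Continuous.subtype_mk (e.continuous.comp continuous_subtype_val) _
  have hm : AEStronglyMeasurable (fun u : Sp => f (u : E)) (σ.map (sphereMap e)) :=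
    (hf.comp measurable_subtype_coe).aestronglyMeasurable
  rw [integral_map hc.aemeasurable hm]
  rfl

lemma integrable_aux {σ : Measure Sp} [IsProbabilityMeasure σ] {f : E → ℝ}
    (hf : Measurable f) {K : ℝ} (hK : ∀ x : E, ‖x‖ = 1 → |f x| ≤ K) :
    Integrable (fun u : Sp => f (u : E)) σ := by
  refine (integrable_const K).mono'
    ((hf.comp measurable_subtype_coe).aestronglyMeasurable)
    (Filter.Eventually.of_forall fun u => ?_)
  rw [Real.norm_eq_abs]
  exact hK u (sphere_norm u)

lemma measurable_coord (i : Fin n) : Measurable fun x : E => x i :=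
  (EuclideanSpace.proj (𝕜 := ℝ) i).continuous.measurable

variable [NeZero n]

noncomputable def mom (σ : Measure Sp) (φ : ℝ → ℝ) (a b c d : Fin n) : ℝ :=
  ∫ u : Sp, φ ((u : E) 0) * ((u : E) a * (u : E) b * (u : E) c * (u : E) d) ∂σ

lemma measurable_momf {φ : ℝ → ℝ} (hφ : Measurable φ) (a b c d : Fin n) :
    Measurable fun x : E => φ (x 0) * (x a * x b * x c * x d) :=
  (hφ.comp (measurable_coord 0)).mul
    ((((measurable_coord a).mul (measurable_coord b)).mul (measurable_coord c)).mul
      (measurable_coord d))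

lemma bdd_nonneg {φ : ℝ → ℝ} {C : ℝ} (hbdd : ∀ s ∈ Set.Icc (-1 : ℝ) 1, |φ s| ≤ C) :
    0 ≤ C :=
  le_trans (abs_nonneg (φ 0)) (hbdd 0 ⟨by norm_num, by norm_num⟩)

lemma abs_coord_le_one (x : E) (hx : ‖x‖ = 1) (i : Fin n) : |x i| ≤ 1 :=
  (coord_abs_le x i).trans_eq hx

lemma abs_prod4_le_one (x : E) (hx : ‖x‖ = 1) (a b c d : Fin n) :
    |x a * x b * x c * x d| ≤ 1 := by
  have h := abs_coord_le_one x hx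
  rw [abs_mul, abs_mul, abs_mul]
  have hab : |x a| * |x b| ≤ 1 :=
    mul_le_one₀ (h a) (abs_nonneg _) (h b)
  have habc : |x a| * |x b| * |x c| ≤ 1 := mul_le_one₀ hab (abs_nonneg _) (h c)
  exact mul_le_one₀ habc (abs_nonneg _) (h d)

lemma integrable_momf {σ : Measure Sp} [IsProbabilityMeasure σ] {φ : ℝ → ℝ}
    (hφ : Measurable φ) {C : ℝ} (hbdd : ∀ s ∈ Set.Icc (-1 : ℝ) 1, |φ s| ≤ C)
    (a b c d : Fin n) :
    Integrable (fun u : Sp => φ ((u : E) 0) * ((u : E) a * (u : E) b * (u : E) c * (u : E) d)) σ := by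
  refine integrable_aux (measurable_momf hφ a b c d) (K := C) fun x hx => ?_
  rw [abs_mul]
  calc |φ (x 0)| * |x a * x b * x c * x d|
      ≤ C * 1 := mul_le_mul (hbdd _ (abs_le.mp (abs_coord_le_one x hx 0)))
        (abs_prod4_le_one x hx a b c d) (abs_nonneg _) (bdd_nonneg hbdd)
    _ = C := mul_one C

@[simp] lemma rotIso_apply (a b : Fin n) (hab : a ≠ b) (x : E) :
    rotIso a b hab x = rotFun a b x := rfl

lemma mom_perm {σ : Measure Sp} (hinv : RotationInvariant σ) {φ : ℝ → ℝ}
    (hφ : Measurable φ) (π : Equiv.Perm (Fin n)) (hπ : π 0 = 0) (a b c d : Fin n) :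
    mom σ φ (π a) (π b) (π c) (π d) = mom σ φ a b c d := by
  unfold mom
  conv_rhs => rw [← integral_comp hinv (permIso π) (measurable_momf hφ a b c d)]
  refine integral_congr_ae (Filter.Eventually.of_forall fun u => ?_)
  simp only [permIso_apply]
  rw [hπ]

lemma mom_flip {σ : Measure Sp} (hinv : RotationInvariant σ) {φ : ℝ → ℝ}
    (hφ : Measurable φ) (t a b c d : Fin n) (ht : t ≠ 0) :
    mom σ φ a b c d
      = ((if a = t then (-1:ℝ) else 1) * (if b = t then (-1:ℝ) else 1)
          * (if c = t then (-1:ℝ) else 1) * (if d = t then (-1:ℝ) else 1))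
        * mom σ φ a b c d := by
  unfold mom
  conv_lhs => rw [← integral_comp hinv (flipIso t) (measurable_momf hφ a b c d)]
  rw [← integral_const_mul]
  refine integral_congr_ae (Filter.Eventually.of_forall fun u => ?_)
  show φ ((flipIso t (u:E)) 0) * ((flipIso t (u:E)) a * (flipIso t (u:E)) b
      * (flipIso t (u:E)) c * (flipIso t (u:E)) d) = _
  simp only [flipIso_apply, if_neg (show (0:Fin n) ≠ t from fun h => ht h.symm)]
  by_cases h1 : a = t <;> by_cases h2 : b = t <;> by_cases h3 : c = t <;> by_cases h4 : d = t <;>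
    simp [h1, h2, h3, h4] <;> ring

lemma mom_zero {σ : Measure Sp} (hinv : RotationInvariant σ) {φ : ℝ → ℝ}
    (hφ : Measurable φ) {a b c d t : Fin n} (ht : t ≠ 0)
    (hs : ((if a = t then (-1:ℝ) else 1) * (if b = t then (-1:ℝ) else 1)
          * (if c = t then (-1:ℝ) else 1) * (if d = t then (-1:ℝ) else 1)) = -1) :
    mom σ φ a b c d = 0 := by
  have h := mom_flip hinv hφ t a b c d ht
  rw [hs] at h; linarith

lemma mom_rearrange1 (σ : Measure Sp) (φ : ℝ → ℝ) (a b : Fin n) :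
    mom σ φ a b a b = mom σ φ a a b b := by
  unfold mom; congr 1; funext u; ring

lemma mom_rearrange2 (σ : Measure Sp) (φ : ℝ → ℝ) (a b : Fin n) :
    mom σ φ a b b a = mom σ φ a a b b := by
  unfold mom; congr 1; funext u; ring

lemma sum_sq_erase (u : Sp) :
    ∑ a ∈ Finset.univ.erase (0 : Fin n), ((u:E) a)^2 = 1 - ((u:E) 0)^2 := by
  have hn : ∑ a, ((u:E) a)^2 = 1 := by
    have h := EuclideanSpace.norm_eq (u:E)
    rw [sphere_norm u] at h
    have hnn : 0 ≤ ∑ i, ‖(u:E) i‖^2 := Finset.sum_nonneg fun i _ => sq_nonneg _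
    have h3 : ∑ i, ‖(u:E) i‖^2 = 1 := by nlinarith [Real.sq_sqrt hnn]
    simpa [Real.norm_eq_abs, sq_abs] using h3
  have h4 := Finset.sum_erase_add Finset.univ (fun a => ((u:E) a)^2) (Finset.mem_univ 0)
  simp only at h4
  rw [hn] at h4; linarith

lemma mom_rot {σ : Measure Sp} [IsProbabilityMeasure σ] (hinv : RotationInvariant σ)
    {φ : ℝ → ℝ} (hφ : Measurable φ) {C : ℝ}
    (hbdd : ∀ s ∈ Set.Icc (-1 : ℝ) 1, |φ s| ≤ C) {a b : Fin n}
    (ha : a ≠ 0) (hb : b ≠ 0) (hab : a ≠ b) :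
    mom σ φ a a a a = 3 * mom σ φ a a b b := by
  have h2 : Real.sqrt 2 ^ 2 = 2 := Real.sq_sqrt (by norm_num)
  have h4 : Real.sqrt 2 ^ 4 = 4 := by
    have h : Real.sqrt 2 ^ 4 = (Real.sqrt 2 ^ 2) ^ 2 := by ring
    rw [h, h2]; norm_num
  have hone : (1:ℝ) ≤ Real.sqrt 2 := by nlinarith [Real.sqrt_nonneg 2, h2]
  have hma : Measurable fun x : E => φ (x 0) * (((x a + x b) / Real.sqrt 2) ^ 4) :=
    (hφ.comp (measurable_coord 0)).mul
      ((((measurable_coord a).add (measurable_coord b)).div_const _).pow_const 4)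
  have hmb : Measurable fun x : E => φ (x 0) * (((x a - x b) / Real.sqrt 2) ^ 4) :=
    (hφ.comp (measurable_coord 0)).mul
      ((((measurable_coord a).sub (measurable_coord b)).div_const _).pow_const 4)
  have hbound : ∀ (p q : ℝ), |p| ≤ 1 → |q| ≤ 1 → |((p + q) / Real.sqrt 2) ^ 4| ≤ 16 := by
    intro p q hp hq
    rw [abs_pow]
    have h1 : |(p + q) / Real.sqrt 2| ≤ 2 := by
      rw [abs_div, abs_of_nonneg (Real.sqrt_nonneg 2)]
      calc |p + q| / Real.sqrt 2 ≤ |p + q| := div_le_self (abs_nonneg _) hone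
        _ ≤ |p| + |q| := abs_add_le p q
        _ ≤ 2 := by linarith
    calc |(p + q) / Real.sqrt 2| ^ 4 ≤ 2 ^ 4 := pow_le_pow_left₀ (abs_nonneg _) h1 4
      _ = 16 := by norm_num
  have hia : Integrable (fun u : Sp =>
      φ ((u:E) 0) * ((((u:E) a + (u:E) b) / Real.sqrt 2) ^ 4)) σ := by
    refine integrable_aux hma (K := C * 16) fun x hx => ?_
    rw [abs_mul]
    exact mul_le_mul (hbdd _ (abs_le.1 (abs_coord_le_one x hx 0)))
      (hbound _ _ (abs_coord_le_one x hx a) (abs_coord_le_one x hx b))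
      (abs_nonneg _) (bdd_nonneg hbdd)
  have hib : Integrable (fun u : Sp =>
      φ ((u:E) 0) * ((((u:E) a - (u:E) b) / Real.sqrt 2) ^ 4)) σ := by
    refine integrable_aux hmb (K := C * 16) fun x hx => ?_
    rw [abs_mul]
    have hbd : |((x a - x b) / Real.sqrt 2) ^ 4| ≤ 16 := by
      have := hbound (x a) (-(x b)) (abs_coord_le_one x hx a)
        (by rw [abs_neg]; exact abs_coord_le_one x hx b)
      simpa [sub_eq_add_neg] using this
    exact mul_le_mul (hbdd _ (abs_le.1 (abs_coord_le_one x hx 0))) hbd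
      (abs_nonneg _) (bdd_nonneg hbdd)
  have hswap : mom σ φ b b b b = mom σ φ a a a a := by
    have hπ : Equiv.swap a b 0 = 0 := Equiv.swap_apply_of_ne_of_ne (Ne.symm ha) (Ne.symm hb)
    have h := mom_perm hinv hφ (Equiv.swap a b) hπ b b b b
    rw [Equiv.swap_apply_right] at h
    exact h.symm
  have e1 : ∫ u : Sp, φ ((u:E) 0) * ((((u:E) a + (u:E) b) / Real.sqrt 2) ^ 4) ∂σ
      = mom σ φ a a a a := by
    unfold mom
    conv_rhs => rw [← integral_comp hinv (rotIso a b hab) (measurable_momf hφ a a a a)]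
    refine integral_congr_ae (Filter.Eventually.of_forall fun u => ?_)
    show φ ((u:E) 0) * ((((u:E) a + (u:E) b) / Real.sqrt 2) ^ 4)
        = φ ((rotIso a b hab (u:E)) 0) * ((rotIso a b hab (u:E)) a * (rotIso a b hab (u:E)) a
            * (rotIso a b hab (u:E)) a * (rotIso a b hab (u:E)) a)
    rw [rotIso_apply, rotFun_other a b _ (Ne.symm ha) (Ne.symm hb), rotFun_a]
    ring
  have e2 : ∫ u : Sp, φ ((u:E) 0) * ((((u:E) a - (u:E) b) / Real.sqrt 2) ^ 4) ∂σ
      = mom σ φ a a a a := by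
    rw [← hswap]
    unfold mom
    conv_rhs => rw [← integral_comp hinv (rotIso a b hab) (measurable_momf hφ b b b b)]
    refine integral_congr_ae (Filter.Eventually.of_forall fun u => ?_)
    show φ ((u:E) 0) * ((((u:E) a - (u:E) b) / Real.sqrt 2) ^ 4)
        = φ ((rotIso a b hab (u:E)) 0) * ((rotIso a b hab (u:E)) b * (rotIso a b hab (u:E)) b
            * (rotIso a b hab (u:E)) b * (rotIso a b hab (u:E)) b)
    rw [rotIso_apply, rotFun_other a b _ (Ne.symm ha) (Ne.symm hb), rotFun_b a b hab]
    ring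
  have hadd : mom σ φ a a a a + mom σ φ a a a a
      = ∫ u : Sp, (φ ((u:E) 0) * ((((u:E) a + (u:E) b) / Real.sqrt 2) ^ 4)
          + φ ((u:E) 0) * ((((u:E) a - (u:E) b) / Real.sqrt 2) ^ 4)) ∂σ := by
    rw [integral_add hia hib, e1, e2]
  have hpt : ∀ u : Sp,
      φ ((u:E) 0) * ((((u:E) a + (u:E) b) / Real.sqrt 2) ^ 4)
        + φ ((u:E) 0) * ((((u:E) a - (u:E) b) / Real.sqrt 2) ^ 4)
      = (1/2) * (φ ((u:E) 0) * ((u:E) a * (u:E) a * (u:E) a * (u:E) a))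
        + ((1/2) * (φ ((u:E) 0) * ((u:E) b * (u:E) b * (u:E) b * (u:E) b))
          + 3 * (φ ((u:E) 0) * ((u:E) a * (u:E) a * (u:E) b * (u:E) b))) := by
    intro u
    rw [div_pow, div_pow, h4]; ring
  have hsplit : ∫ u : Sp, (φ ((u:E) 0) * ((((u:E) a + (u:E) b) / Real.sqrt 2) ^ 4)
          + φ ((u:E) 0) * ((((u:E) a - (u:E) b) / Real.sqrt 2) ^ 4)) ∂σ
      = (1/2) * mom σ φ a a a a + ((1/2) * mom σ φ b b b b + 3 * mom σ φ a a b b) := by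
    have i1 : Integrable (fun u : Sp =>
        (1/2) * (φ ((u:E) 0) * ((u:E) a * (u:E) a * (u:E) a * (u:E) a))) σ :=
      (integrable_momf hφ hbdd a a a a).const_mul _
    have i2 : Integrable (fun u : Sp =>
        (1/2) * (φ ((u:E) 0) * ((u:E) b * (u:E) b * (u:E) b * (u:E) b))) σ :=
      (integrable_momf hφ hbdd b b b b).const_mul _
    have i3 : Integrable (fun u : Sp =>
        3 * (φ ((u:E) 0) * ((u:E) a * (u:E) a * (u:E) b * (u:E) b))) σ :=
      (integrable_momf hφ hbdd a a b b).const_mul _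
    have i23 : Integrable (fun u : Sp =>
        (1/2) * (φ ((u:E) 0) * ((u:E) b * (u:E) b * (u:E) b * (u:E) b))
          + 3 * (φ ((u:E) 0) * ((u:E) a * (u:E) a * (u:E) b * (u:E) b))) σ := i2.add i3
    rw [integral_congr_ae (Filter.Eventually.of_forall hpt),
      integral_add i1 i23, integral_add i2 i3,
      integral_const_mul, integral_const_mul, integral_const_mul]
    rfl
  rw [hswap] at hsplit
  linarith [hadd, hsplit]

lemma mom_trace {σ : Measure Sp} [IsProbabilityMeasure σ] {φ : ℝ → ℝ} (hφ : Measurable φ)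
    {C : ℝ} (hbdd : ∀ s ∈ Set.Icc (-1 : ℝ) 1, |φ s| ≤ C) :
    ∑ a ∈ Finset.univ.erase (0 : Fin n), ∑ b ∈ Finset.univ.erase (0 : Fin n), mom σ φ a a b b
      = ∫ u : Sp, φ ((u:E) 0) * (1 - ((u:E) 0)^2)^2 ∂σ := by
  have step1 : ∀ a ∈ Finset.univ.erase (0 : Fin n),
      ∑ b ∈ Finset.univ.erase (0 : Fin n), mom σ φ a a b b
        = ∫ u : Sp, (∑ b ∈ Finset.univ.erase (0 : Fin n),
            φ ((u:E) 0) * ((u:E) a * (u:E) a * (u:E) b * (u:E) b)) ∂σ :=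
    fun a _ => (integral_finset_sum _ fun b _ => integrable_momf hφ hbdd a a b b).symm
  rw [Finset.sum_congr rfl step1,
      ← integral_finset_sum _ (fun a _ => integrable_finset_sum _
        fun b _ => integrable_momf hφ hbdd a a b b)]
  refine integral_congr_ae (Filter.Eventually.of_forall fun u => ?_)
  show ∑ a ∈ Finset.univ.erase (0 : Fin n), ∑ b ∈ Finset.univ.erase (0 : Fin n),
      φ ((u:E) 0) * ((u:E) a * (u:E) a * (u:E) b * (u:E) b)
    = φ ((u:E) 0) * (1 - ((u:E) 0)^2)^2
  calc ∑ a ∈ Finset.univ.erase (0 : Fin n), ∑ b ∈ Finset.univ.erase (0 : Fin n),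
        φ ((u:E) 0) * ((u:E) a * (u:E) a * (u:E) b * (u:E) b)
      = ∑ a ∈ Finset.univ.erase (0 : Fin n), ∑ b ∈ Finset.univ.erase (0 : Fin n),
          (φ ((u:E) 0) * ((u:E) a)^2) * ((u:E) b)^2 :=
        Finset.sum_congr rfl fun a _ => Finset.sum_congr rfl fun b _ => by ring
    _ = (∑ a ∈ Finset.univ.erase (0 : Fin n), φ ((u:E) 0) * ((u:E) a)^2)
          * (∑ b ∈ Finset.univ.erase (0 : Fin n), ((u:E) b)^2) :=
        (Finset.sum_mul_sum _ _ _ _).symm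
    _ = φ ((u:E) 0) * (1 - ((u:E) 0)^2)^2 := by
        rw [show ∑ a ∈ Finset.univ.erase (0 : Fin n), φ ((u:E) 0) * ((u:E) a)^2
            = φ ((u:E) 0) * ∑ a ∈ Finset.univ.erase (0 : Fin n), ((u:E) a)^2 from
          (Finset.mul_sum _ _ _).symm, sum_sq_erase]
        ring

lemma mom_diag {σ : Measure Sp} [IsProbabilityMeasure σ] (hinv : RotationInvariant σ)
    {φ : ℝ → ℝ} (hφ : Measurable φ) {C : ℝ}
    (hbdd : ∀ s ∈ Set.Icc (-1 : ℝ) 1, |φ s| ≤ C) (hn : 2 ≤ n)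
    {a : Fin n} (ha : a ≠ 0) :
    mom σ φ a a a a = 3 * ((1 / (((n:ℝ) - 1) * ((n:ℝ) + 1)))
      * ∫ u : Sp, φ ((u:E) 0) * (1 - ((u:E) 0)^2)^2 ∂σ) := by
  set X := mom σ φ a a a a with hX
  set T := ∫ u : Sp, φ ((u:E) 0) * (1 - ((u:E) 0)^2)^2 ∂σ with hT
  have hfour : ∀ p : Fin n, p ≠ 0 → mom σ φ p p p p = X := by
    intro p hp
    rcases eq_or_ne p a with rfl | hpa
    · rfl
    · have hπ : Equiv.swap a p 0 = 0 :=
        Equiv.swap_apply_of_ne_of_ne (Ne.symm ha) (Ne.symm hp)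
      have h := mom_perm hinv hφ (Equiv.swap a p) hπ a a a a
      rw [Equiv.swap_apply_left] at h
      exact h
  have hppqq : ∀ p q : Fin n, p ≠ 0 → q ≠ 0 → p ≠ q → mom σ φ p p q q = X / 3 := by
    intro p q hp hq hpq
    have h1 := mom_rot hinv hφ hbdd hp hq hpq
    rw [hfour p hp] at h1; linarith
  have htrace := mom_trace (σ := σ) hφ hbdd
  rw [← hT] at htrace
  have hcard : (Finset.univ.erase (0 : Fin n)).card = n - 1 := by
    rw [Finset.card_erase_of_mem (Finset.mem_univ _), Finset.card_univ, Fintype.card_fin]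
  have hsum : ∑ p ∈ Finset.univ.erase (0 : Fin n), ∑ q ∈ Finset.univ.erase (0 : Fin n),
      mom σ φ p p q q = ((n:ℝ) - 1) * (X + ((n:ℝ) - 2) * (X/3)) := by
    have inner : ∀ p ∈ Finset.univ.erase (0 : Fin n),
        ∑ q ∈ Finset.univ.erase (0 : Fin n), mom σ φ p p q q
          = X + ((n:ℝ) - 2) * (X/3) := by
      intro p hp
      have hp0 : p ≠ 0 := (Finset.mem_erase.1 hp).1
      rw [← Finset.sum_erase_add _ _ hp, hfour p hp0]
      have hq : ∀ q ∈ (Finset.univ.erase (0 : Fin n)).erase p, mom σ φ p p q q = X/3 := by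
        intro q hq
        have h1 := Finset.mem_erase.1 hq
        exact hppqq p q hp0 (Finset.mem_erase.1 h1.2).1 (Ne.symm h1.1)
      rw [Finset.sum_congr rfl hq, Finset.sum_const, nsmul_eq_mul]
      have hc2 : ((Finset.univ.erase (0 : Fin n)).erase p).card = n - 2 := by
        rw [Finset.card_erase_of_mem (Finset.mem_erase.2 ⟨hp0, Finset.mem_univ _⟩), hcard]
        omega
      rw [hc2]
      have hcast : ((n - 2 : ℕ) : ℝ) = (n:ℝ) - 2 := by
        have h2n : (2:ℕ) ≤ n := hn
        push_cast [Nat.cast_sub h2n]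
        ring
      rw [hcast]; ring
    rw [Finset.sum_congr rfl inner, Finset.sum_const, nsmul_eq_mul, hcard]
    have hcast : ((n - 1 : ℕ) : ℝ) = (n:ℝ) - 1 := by
      have h1n : (1:ℕ) ≤ n := by omega
      push_cast [Nat.cast_sub h1n]
      ring
    rw [hcast]
  rw [hsum] at htrace
  have hc2 : (2:ℝ) ≤ (n:ℝ) := by exact_mod_cast hn
  have hne1 : (n:ℝ) - 1 ≠ 0 := by linarith
  have hne2 : (n:ℝ) + 1 ≠ 0 := by linarith
  field_simp
  linarith [htrace, mul_comm X (((n:ℝ) - 1) * ((n:ℝ) + 1))]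

noncomputable def Cs (σ : Measure Sp) (φ : ℝ → ℝ) : ℝ :=
  (1 / (((n:ℝ) - 1) * ((n:ℝ) + 1))) * ∫ u : Sp, φ ((u:E) 0) * (1 - ((u:E) 0)^2)^2 ∂σ

lemma mom_diag' {σ : Measure Sp} [IsProbabilityMeasure σ] (hinv : RotationInvariant σ)
    {φ : ℝ → ℝ} (hφ : Measurable φ) {C : ℝ}
    (hbdd : ∀ s ∈ Set.Icc (-1 : ℝ) 1, |φ s| ≤ C) (hn : 2 ≤ n)
    {a : Fin n} (ha : a ≠ 0) : mom σ φ a a a a = 3 * Cs σ φ :=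
  mom_diag hinv hφ hbdd hn ha

lemma mom_pair {σ : Measure Sp} [IsProbabilityMeasure σ] (hinv : RotationInvariant σ)
    {φ : ℝ → ℝ} (hφ : Measurable φ) {C : ℝ}
    (hbdd : ∀ s ∈ Set.Icc (-1 : ℝ) 1, |φ s| ≤ C) (hn : 2 ≤ n)
    {a b : Fin n} (ha : a ≠ 0) (hb : b ≠ 0) (hab : a ≠ b) :
    mom σ φ a a b b = Cs σ φ := by
  have h1 := mom_rot hinv hφ hbdd ha hb hab
  have h2 := mom_diag' hinv hφ hbdd hn ha
  linarith

lemma mom_formula {σ : Measure Sp} [IsProbabilityMeasure σ] (hinv : RotationInvariant σ)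
    {φ : ℝ → ℝ} (hφ : Measurable φ) {C : ℝ}
    (hbdd : ∀ s ∈ Set.Icc (-1 : ℝ) 1, |φ s| ≤ C) (hn : 2 ≤ n)
    {a b c d : Fin n} (ha : a ≠ 0) (hb : b ≠ 0) (hc : c ≠ 0) (hd : d ≠ 0) :
    mom σ φ a b c d = Cs σ φ *
      ((if a = b then (1:ℝ) else 0) * (if c = d then (1:ℝ) else 0)
        + (if a = c then (1:ℝ) else 0) * (if b = d then (1:ℝ) else 0)
        + (if a = d then (1:ℝ) else 0) * (if b = c then (1:ℝ) else 0)) := by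
  by_cases hab : a = b
  · subst hab
    by_cases hcd : c = d
    · subst hcd
      by_cases hac : a = c
      · subst hac
        rw [mom_diag' hinv hφ hbdd hn ha, if_pos (rfl : a = a)]; ring
      · simp [hac]
        exact mom_pair hinv hφ hbdd hn ha hc hac
    · have hz : mom σ φ a a c d = 0 := by
        by_cases hca : c = a
        · have had : a ≠ d := fun h => hcd (hca.trans h)
          exact mom_zero hinv hφ (t := d) hd
            (by simp [had, hcd])
        · have hac' : a ≠ c := fun h => hca h.symm
          have hdc : d ≠ c := Ne.symm hcd
          exact mom_zero hinv hφ (t := c) hc (by simp [hac', hdc])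
      rw [hz]
      by_cases hac : a = c
      · have had : a ≠ d := fun h => hcd (hac.symm.trans h)
        simp [hcd, had]
      · simp [hcd, hac]
  · by_cases hcd : c = d
    · subst hcd
      have hz : mom σ φ a b c c = 0 := by
        by_cases hca : c = a
        · have hcb : c ≠ b := fun h => hab (hca.symm.trans h)
          exact mom_zero hinv hφ (t := b) hb
            (by simp [hab, hcb])
        · exact mom_zero hinv hφ (t := a) ha
            (by simp [Ne.symm hab, fun h : c = a => hca h])
      rw [hz]
      by_cases hac : a = c
      · have hbc : b ≠ c := fun h => hab (hac.trans h.symm)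
        simp [hab, hbc]
      · simp [hab, hac]
    · by_cases hac : a = c
      · subst hac
        by_cases hbd : b = d
        · subst hbd
          rw [mom_rearrange1, mom_pair hinv hφ hbdd hn ha hb hab]
          simp [hab, Ne.symm hab]
        · have hz : mom σ φ a b a d = 0 :=
            mom_zero hinv hφ (t := b) hb
              (by simp [hab, Ne.symm hbd])
          rw [hz]
          simp [hab, Ne.symm hab, hbd, Ne.symm hbd]
      · by_cases had : a = d
        · subst had
          by_cases hbc : b = c
          · subst hbc
            rw [mom_rearrange2, mom_pair hinv hφ hbdd hn ha hb hab]
            simp [hab, Ne.symm hab]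
          · have hz : mom σ φ a b c a = 0 :=
              mom_zero hinv hφ (t := b) hb
                (by simp [hab, Ne.symm hbc])
            rw [hz]
            simp [hab, Ne.symm hab, hac, Ne.symm hac, hbc, Ne.symm hbc]
        · have hz : mom σ φ a b c d = 0 :=
            mom_zero hinv hφ (t := a) ha
              (by simp [Ne.symm hab, Ne.symm hac, Ne.symm had])
          rw [hz]
          simp [hab, Ne.symm hab, hac, Ne.symm hac, had, Ne.symm had]

lemma collapse (h : Fin n → ℝ) (a : Fin n) :
    ∑ b, (if a = b then (1:ℝ) else 0) * h b = h a := by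
  rw [Finset.sum_congr rfl (fun b _ => by rw [ite_mul, one_mul, zero_mul]),
    Finset.sum_ite_eq]
  simp

/-- Fourth tangential moment identity:
`∫ φ(u·Ω) (u⊥)_i (u⊥)_j (u⊥)_k (u⊥)_l dσ = C_S (P_{ij}P_{kl} + P_{ik}P_{jl} + P_{il}P_{jk})`
with `C_S = (1/((n−1)(n+1))) ∫ φ(u·Ω)(1−(u·Ω)²)² dσ`. -/
theorem integral_weight_fourth_tangential_moment (n : ℕ) (hn : 2 ≤ n)
    (σ : Measure (sphere (0 : EuclideanSpace ℝ (Fin n)) 1))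
    (hprob : IsProbabilityMeasure σ) (hinv : RotationInvariant σ)
    (Ω : EuclideanSpace ℝ (Fin n)) (hΩ : ‖Ω‖ = 1)
    (φ : ℝ → ℝ) (hφ : Measurable φ) (C : ℝ)
    (hbdd : ∀ s ∈ Set.Icc (-1 : ℝ) 1, |φ s| ≤ C) :
    ∀ i j k l : Fin n,
      (∫ u : sphere (0 : EuclideanSpace ℝ (Fin n)) 1,
          φ ⟪(u : EuclideanSpace ℝ (Fin n)), Ω⟫ *
            (((u : EuclideanSpace ℝ (Fin n)) i
                - ⟪(u : EuclideanSpace ℝ (Fin n)), Ω⟫ * Ω i) *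
              ((u : EuclideanSpace ℝ (Fin n)) j
                - ⟪(u : EuclideanSpace ℝ (Fin n)), Ω⟫ * Ω j) *
              ((u : EuclideanSpace ℝ (Fin n)) k
                - ⟪(u : EuclideanSpace ℝ (Fin n)), Ω⟫ * Ω k) *
              ((u : EuclideanSpace ℝ (Fin n)) l
                - ⟪(u : EuclideanSpace ℝ (Fin n)), Ω⟫ * Ω l)) ∂σ)
        = ((1 / (((n : ℝ) - 1) * ((n : ℝ) + 1))) *
            ∫ u : sphere (0 : EuclideanSpace ℝ (Fin n)) 1,
              φ ⟪(u : EuclideanSpace ℝ (Fin n)), Ω⟫ *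
                (1 - ⟪(u : EuclideanSpace ℝ (Fin n)), Ω⟫ ^ 2) ^ 2 ∂σ) *
          (projEntry Ω i j * projEntry Ω k l + projEntry Ω i k * projEntry Ω j l
            + projEntry Ω i l * projEntry Ω j k) := by
  intro i j k l
  haveI := hprob
  haveI : NeZero n := ⟨by omega⟩
  -- the isometry sending e₀ to Ω
  have hnv : ‖EuclideanSpace.single (0 : Fin n) (1:ℝ)‖ = 1 := by
    rw [EuclideanSpace.norm_single]; norm_num
  set e : EuclideanSpace ℝ (Fin n) ≃ₗᵢ[ℝ] EuclideanSpace ℝ (Fin n) :=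
    Submodule.reflection (Submodule.span ℝ {EuclideanSpace.single (0 : Fin n) (1:ℝ) - Ω})ᗮ with he_def
  have he : e (EuclideanSpace.single (0 : Fin n) (1:ℝ)) = Ω :=
    Submodule.reflection_sub (by rw [hnv, hΩ])
  have hinner_single : ∀ (x : EuclideanSpace ℝ (Fin n)) (m : Fin n), ⟪x, EuclideanSpace.single m (1:ℝ)⟫ = x m := by
    intro x m
    rw [EuclideanSpace.inner_single_right]
    simp
  have hinner_e : ∀ (x y : EuclideanSpace ℝ (Fin n)), (⟪e x, y⟫ : ℝ) = ⟪x, e.symm y⟫ := by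
    intro x y
    calc (⟪e x, y⟫ : ℝ) = ⟪e x, e (e.symm y)⟫ := by rw [e.apply_symm_apply]
      _ = ⟪x, e.symm y⟫ := e.inner_map_map _ _
  have hkey1 : ∀ x : EuclideanSpace ℝ (Fin n), (⟪e x, Ω⟫ : ℝ) = x 0 := by
    intro x
    rw [← he, e.inner_map_map, hinner_single]
  -- the orthogonal matrix coefficients
  set q : Fin n → Fin n → ℝ := fun a m => e (EuclideanSpace.single a (1:ℝ)) m with hq
  set q' : Fin n → Fin n → ℝ := fun a m => if a = 0 then 0 else q a m with hq'
  have hq'0 : ∀ m, q' 0 m = 0 := fun m => if_pos rfl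
  have hq'ne : ∀ p : Fin n, p ≠ 0 → ∀ m, q' p m = q p m := fun p hp m => if_neg hp
  have hq0m : ∀ m, q 0 m = Ω m := by
    intro m
    show e (EuclideanSpace.single (0 : Fin n) (1:ℝ)) m = Ω m
    rw [he]
  have hqsym : ∀ a m : Fin n, q a m = e.symm (EuclideanSpace.single m (1:ℝ)) a := by
    intro a m
    show e (EuclideanSpace.single a (1:ℝ)) m = _
    rw [← hinner_single (e (EuclideanSpace.single a (1:ℝ))) m, hinner_e,
      EuclideanSpace.inner_single_left]
    simp
  have hdecomp : ∀ (x : EuclideanSpace ℝ (Fin n)) (m : Fin n), e x m = ∑ p : Fin n, x p * q p m := by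
    intro x m
    rw [← hinner_single (e x) m, hinner_e, PiLp.inner_apply]
    refine Finset.sum_congr rfl fun p _ => ?_
    rw [hqsym p m]
    simp [RCLike.inner_apply, mul_comm]
  have hortho : ∀ m m' : Fin n, ∑ p : Fin n, q p m * q p m'
      = if m = m' then (1:ℝ) else 0 := by
    intro m m'
    have h1 : (⟪e.symm (EuclideanSpace.single m (1:ℝ)),
        e.symm (EuclideanSpace.single m' (1:ℝ))⟫ : ℝ) = ∑ p, q p m * q p m' := by
      rw [PiLp.inner_apply]
      refine Finset.sum_congr rfl fun p _ => ?_
      rw [hqsym p m, hqsym p m']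
      simp [RCLike.inner_apply, mul_comm]
    have h2 : (⟪e.symm (EuclideanSpace.single m (1:ℝ)),
        e.symm (EuclideanSpace.single m' (1:ℝ))⟫ : ℝ)
        = ⟪(EuclideanSpace.single m (1:ℝ) : EuclideanSpace ℝ (Fin n)), EuclideanSpace.single m' (1:ℝ)⟫ :=
      e.symm.inner_map_map _ _
    have h3 : (⟪(EuclideanSpace.single m (1:ℝ) : EuclideanSpace ℝ (Fin n)), EuclideanSpace.single m' (1:ℝ)⟫ : ℝ)
        = if m = m' then (1:ℝ) else 0 := by
      rw [hinner_single, EuclideanSpace.single_apply]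
      by_cases h : m = m' <;> simp [h, eq_comm]
    rw [← h1, h2, h3]
  have hQ : ∀ m m' : Fin n, ∑ p, q' p m * q' p m' = projEntry Ω m m' := by
    intro m m'
    have h2 := Finset.sum_erase_add Finset.univ (fun p => q p m * q p m') (Finset.mem_univ 0)
    have h3 := Finset.sum_erase_add Finset.univ (fun p => q' p m * q' p m') (Finset.mem_univ 0)
    rw [hortho m m', hq0m, hq0m] at h2
    rw [hq'0, hq'0] at h3
    have h1 : ∑ p ∈ Finset.univ.erase (0 : Fin n), q' p m * q' p m'
        = ∑ p ∈ Finset.univ.erase (0 : Fin n), q p m * q p m' :=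
      Finset.sum_congr rfl fun p hp => by
        rw [hq'ne p (Finset.mem_erase.1 hp).1, hq'ne p (Finset.mem_erase.1 hp).1]
    rw [h1] at h3
    unfold projEntry
    linarith [h2, h3]
  -- expansion of the tangential factors
  have hfac : ∀ (x : EuclideanSpace ℝ (Fin n)) (m : Fin n),
      e x m - (⟪e x, Ω⟫ : ℝ) * Ω m = ∑ p, x p * q' p m := by
    intro x m
    rw [hkey1, hdecomp]
    have h2 := Finset.sum_erase_add Finset.univ (fun p => x p * q p m) (Finset.mem_univ 0)
    have h3 := Finset.sum_erase_add Finset.univ (fun p => x p * q' p m) (Finset.mem_univ 0)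
    simp only at h2 h3
    rw [hq0m] at h2
    rw [hq'0] at h3
    have h1 : ∑ p ∈ Finset.univ.erase (0 : Fin n), x p * q' p m
        = ∑ p ∈ Finset.univ.erase (0 : Fin n), x p * q p m :=
      Finset.sum_congr rfl fun p hp => by rw [hq'ne p (Finset.mem_erase.1 hp).1]
    rw [h1] at h3
    linarith [h2, h3]
  -- measurability of the full integrand
  have hinnerc : Continuous fun x : EuclideanSpace ℝ (Fin n) => (⟪x, Ω⟫ : ℝ) := continuous_id.inner continuous_const
  have hfacm : ∀ m : Fin n, Measurable fun x : EuclideanSpace ℝ (Fin n) => x m - (⟪x, Ω⟫ : ℝ) * Ω m :=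
    fun m => (measurable_coord m).sub (hinnerc.measurable.mul_const _)
  have hmeasF : Measurable fun x : EuclideanSpace ℝ (Fin n) => φ ⟪x, Ω⟫ *
      ((x i - (⟪x, Ω⟫:ℝ) * Ω i) * (x j - (⟪x, Ω⟫:ℝ) * Ω j) * (x k - (⟪x, Ω⟫:ℝ) * Ω k)
        * (x l - (⟪x, Ω⟫:ℝ) * Ω l)) :=
    (hφ.comp hinnerc.measurable).mul
      ((((hfacm i).mul (hfacm j)).mul (hfacm k)).mul (hfacm l))
  -- change of variables for the constant
  have hconstm : Measurable fun x : EuclideanSpace ℝ (Fin n) => φ ⟪x, Ω⟫ * (1 - (⟪x, Ω⟫:ℝ)^2)^2 :=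
    (hφ.comp hinnerc.measurable).mul
      ((measurable_const.sub (hinnerc.measurable.pow_const 2)).pow_const 2)
  have hconst : ∫ u : sphere (0 : EuclideanSpace ℝ (Fin n)) 1, φ ⟪(u : EuclideanSpace ℝ (Fin n)), Ω⟫ * (1 - (⟪(u : EuclideanSpace ℝ (Fin n)), Ω⟫:ℝ)^2)^2 ∂σ
      = ∫ u : sphere (0 : EuclideanSpace ℝ (Fin n)) 1, φ ((u : EuclideanSpace ℝ (Fin n)) 0) * (1 - ((u : EuclideanSpace ℝ (Fin n)) 0)^2)^2 ∂σ := by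
    rw [← integral_comp hinv e hconstm]
    refine integral_congr_ae (Filter.Eventually.of_forall fun u => ?_)
    show φ ⟪e (u : EuclideanSpace ℝ (Fin n)), Ω⟫ * (1 - (⟪e (u : EuclideanSpace ℝ (Fin n)), Ω⟫:ℝ)^2)^2 = _
    rw [hkey1]
  -- main computation
  conv_lhs => rw [← integral_comp hinv e hmeasF]
  have hpt : ∀ u : sphere (0 : EuclideanSpace ℝ (Fin n)) 1,
      φ ⟪e (u : EuclideanSpace ℝ (Fin n)), Ω⟫ * ((e (u : EuclideanSpace ℝ (Fin n)) i - (⟪e (u : EuclideanSpace ℝ (Fin n)), Ω⟫:ℝ) * Ω i)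
        * (e (u : EuclideanSpace ℝ (Fin n)) j - (⟪e (u : EuclideanSpace ℝ (Fin n)), Ω⟫:ℝ) * Ω j) * (e (u : EuclideanSpace ℝ (Fin n)) k - (⟪e (u : EuclideanSpace ℝ (Fin n)), Ω⟫:ℝ) * Ω k)
        * (e (u : EuclideanSpace ℝ (Fin n)) l - (⟪e (u : EuclideanSpace ℝ (Fin n)), Ω⟫:ℝ) * Ω l))
      = ∑ a : Fin n, ∑ b : Fin n, ∑ c : Fin n, ∑ d : Fin n,
          (φ ((u : EuclideanSpace ℝ (Fin n)) 0) * ((u : EuclideanSpace ℝ (Fin n)) a * (u : EuclideanSpace ℝ (Fin n)) b * (u : EuclideanSpace ℝ (Fin n)) c * (u : EuclideanSpace ℝ (Fin n)) d))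
            * (q' a i * q' b j * q' c k * q' d l) := by
    intro u
    rw [hfac (u : EuclideanSpace ℝ (Fin n)) i, hfac (u : EuclideanSpace ℝ (Fin n)) j,
      hfac (u : EuclideanSpace ℝ (Fin n)) k, hfac (u : EuclideanSpace ℝ (Fin n)) l, hkey1]
    calc φ ((u : EuclideanSpace ℝ (Fin n)) 0)
        * ((∑ p, (u : EuclideanSpace ℝ (Fin n)) p * q' p i)
          * (∑ p, (u : EuclideanSpace ℝ (Fin n)) p * q' p j)
          * (∑ p, (u : EuclideanSpace ℝ (Fin n)) p * q' p k)
          * (∑ p, (u : EuclideanSpace ℝ (Fin n)) p * q' p l))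
        = φ ((u : EuclideanSpace ℝ (Fin n)) 0)
          * (((∑ p, (u : EuclideanSpace ℝ (Fin n)) p * q' p i)
            * (∑ p, (u : EuclideanSpace ℝ (Fin n)) p * q' p j))
          * ((∑ p, (u : EuclideanSpace ℝ (Fin n)) p * q' p k)
            * (∑ p, (u : EuclideanSpace ℝ (Fin n)) p * q' p l))) := by ring
      _ = φ ((u : EuclideanSpace ℝ (Fin n)) 0)
          * ((∑ a : Fin n, ∑ b : Fin n, ((u : EuclideanSpace ℝ (Fin n)) a * q' a i)
              * ((u : EuclideanSpace ℝ (Fin n)) b * q' b j))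
            * (∑ c : Fin n, ∑ d : Fin n, ((u : EuclideanSpace ℝ (Fin n)) c * q' c k)
              * ((u : EuclideanSpace ℝ (Fin n)) d * q' d l))) := by
          rw [Finset.sum_mul_sum Finset.univ Finset.univ
              (fun p => (u : EuclideanSpace ℝ (Fin n)) p * q' p i)
              (fun p => (u : EuclideanSpace ℝ (Fin n)) p * q' p j),
            Finset.sum_mul_sum Finset.univ Finset.univ
              (fun p => (u : EuclideanSpace ℝ (Fin n)) p * q' p k)
              (fun p => (u : EuclideanSpace ℝ (Fin n)) p * q' p l)]
      _ = φ ((u : EuclideanSpace ℝ (Fin n)) 0)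
          * (∑ a : Fin n, ∑ c : Fin n,
              (∑ b : Fin n, ((u : EuclideanSpace ℝ (Fin n)) a * q' a i)
                * ((u : EuclideanSpace ℝ (Fin n)) b * q' b j))
              * (∑ d : Fin n, ((u : EuclideanSpace ℝ (Fin n)) c * q' c k)
                * ((u : EuclideanSpace ℝ (Fin n)) d * q' d l))) := by
          rw [Finset.sum_mul_sum]
      _ = φ ((u : EuclideanSpace ℝ (Fin n)) 0)
          * (∑ a : Fin n, ∑ c : Fin n, ∑ b : Fin n, ∑ d : Fin n,
              (((u : EuclideanSpace ℝ (Fin n)) a * q' a i)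
                * ((u : EuclideanSpace ℝ (Fin n)) b * q' b j))
              * (((u : EuclideanSpace ℝ (Fin n)) c * q' c k)
                * ((u : EuclideanSpace ℝ (Fin n)) d * q' d l))) := by
          refine congrArg _ (Finset.sum_congr rfl fun a _ => Finset.sum_congr rfl fun c _ =>
            Finset.sum_mul_sum _ _ _ _)
      _ = φ ((u : EuclideanSpace ℝ (Fin n)) 0)
          * (∑ a : Fin n, ∑ b : Fin n, ∑ c : Fin n, ∑ d : Fin n,
              (((u : EuclideanSpace ℝ (Fin n)) a * q' a i)
                * ((u : EuclideanSpace ℝ (Fin n)) b * q' b j))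
              * (((u : EuclideanSpace ℝ (Fin n)) c * q' c k)
                * ((u : EuclideanSpace ℝ (Fin n)) d * q' d l))) := by
          refine congrArg _ (Finset.sum_congr rfl fun a _ => Finset.sum_comm)
      _ = ∑ a : Fin n, ∑ b : Fin n, ∑ c : Fin n, ∑ d : Fin n,
            (φ ((u : EuclideanSpace ℝ (Fin n)) 0) * ((u : EuclideanSpace ℝ (Fin n)) a
              * (u : EuclideanSpace ℝ (Fin n)) b * (u : EuclideanSpace ℝ (Fin n)) c
              * (u : EuclideanSpace ℝ (Fin n)) d))
              * (q' a i * q' b j * q' c k * q' d l) := by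
          simp only [Finset.mul_sum]
          refine Finset.sum_congr rfl fun a _ => Finset.sum_congr rfl fun b _ =>
            Finset.sum_congr rfl fun c _ => Finset.sum_congr rfl fun d _ => by ring
  refine Eq.trans (integral_congr_ae (Filter.Eventually.of_forall hpt)) ?_
  have hint_atom : ∀ a b c d : Fin n, Integrable (fun u : sphere (0 : EuclideanSpace ℝ (Fin n)) 1 =>
      (φ ((u : EuclideanSpace ℝ (Fin n)) 0) * ((u : EuclideanSpace ℝ (Fin n)) a * (u : EuclideanSpace ℝ (Fin n)) b * (u : EuclideanSpace ℝ (Fin n)) c * (u : EuclideanSpace ℝ (Fin n)) d))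
        * (q' a i * q' b j * q' c k * q' d l)) σ :=
    fun a b c d => (integrable_momf hφ hbdd a b c d).mul_const _
  rw [integral_finset_sum _ (fun a _ => integrable_finset_sum _ fun b _ =>
    integrable_finset_sum _ fun c _ => integrable_finset_sum _ fun d _ => hint_atom a b c d)]
  have hswap1 : ∀ a : Fin n,
      ∫ u : sphere (0 : EuclideanSpace ℝ (Fin n)) 1, (∑ b : Fin n, ∑ c : Fin n, ∑ d : Fin n,
        (φ ((u : EuclideanSpace ℝ (Fin n)) 0) * ((u : EuclideanSpace ℝ (Fin n)) a * (u : EuclideanSpace ℝ (Fin n)) b * (u : EuclideanSpace ℝ (Fin n)) c * (u : EuclideanSpace ℝ (Fin n)) d))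
          * (q' a i * q' b j * q' c k * q' d l)) ∂σ
      = ∑ b : Fin n, ∑ c : Fin n, ∑ d : Fin n, mom σ φ a b c d
          * (q' a i * q' b j * q' c k * q' d l) := by
    intro a
    rw [integral_finset_sum _ (fun b _ => integrable_finset_sum _ fun c _ =>
      integrable_finset_sum _ fun d _ => hint_atom a b c d)]
    refine Finset.sum_congr rfl fun b _ => ?_
    rw [integral_finset_sum _ (fun c _ => integrable_finset_sum _ fun d _ => hint_atom a b c d)]
    refine Finset.sum_congr rfl fun c _ => ?_
    rw [integral_finset_sum _ (fun d _ => hint_atom a b c d)]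
    refine Finset.sum_congr rfl fun d _ => ?_
    exact integral_mul_const _ _
  rw [Finset.sum_congr rfl fun a _ => hswap1 a]
  -- evaluate each moment
  have hval : ∀ a b c d : Fin n,
      mom σ φ a b c d * (q' a i * q' b j * q' c k * q' d l)
      = Cs σ φ * (((if a = b then (1:ℝ) else 0) * (if c = d then (1:ℝ) else 0)
          + (if a = c then (1:ℝ) else 0) * (if b = d then (1:ℝ) else 0)
          + (if a = d then (1:ℝ) else 0) * (if b = c then (1:ℝ) else 0))
        * (q' a i * q' b j * q' c k * q' d l)) := by
    intro a b c d
    by_cases ha : a = 0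
    · rw [ha, hq'0 i]; ring
    by_cases hb : b = 0
    · rw [hb, hq'0 j]; ring
    by_cases hc : c = 0
    · rw [hc, hq'0 k]; ring
    by_cases hd : d = 0
    · rw [hd, hq'0 l]; ring
    rw [mom_formula hinv hφ hbdd hn ha hb hc hd]; ring
  rw [Finset.sum_congr rfl fun a _ => Finset.sum_congr rfl fun b _ =>
    Finset.sum_congr rfl fun c _ => Finset.sum_congr rfl fun d _ => hval a b c d]
  -- split into three sums and collapse
  have hsplit : ∀ a b c d : Fin n,
      Cs σ φ * (((if a = b then (1:ℝ) else 0) * (if c = d then (1:ℝ) else 0)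
          + (if a = c then (1:ℝ) else 0) * (if b = d then (1:ℝ) else 0)
          + (if a = d then (1:ℝ) else 0) * (if b = c then (1:ℝ) else 0))
        * (q' a i * q' b j * q' c k * q' d l))
      = Cs σ φ * (((if a = b then (1:ℝ) else 0) * (if c = d then (1:ℝ) else 0))
          * (q' a i * q' b j * q' c k * q' d l))
        + (Cs σ φ * (((if a = c then (1:ℝ) else 0) * (if b = d then (1:ℝ) else 0))
          * (q' a i * q' b j * q' c k * q' d l))
        + Cs σ φ * (((if a = d then (1:ℝ) else 0) * (if b = c then (1:ℝ) else 0))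
          * (q' a i * q' b j * q' c k * q' d l))) := fun a b c d => by ring
  rw [Finset.sum_congr rfl fun a _ => Finset.sum_congr rfl fun b _ =>
    Finset.sum_congr rfl fun c _ => Finset.sum_congr rfl fun d _ => hsplit a b c d]
  simp only [Finset.sum_add_distrib, ← Finset.mul_sum]
  -- the three collapsed sums
  have s3gen : ∀ (a : Fin n) (m m' : Fin n), ∑ b, (if a = b then (1:ℝ) else 0) * (q' a m * q' b m') = q' a m * q' a m' :=
    fun a m m' => collapse (fun b => q' a m * q' b m') a
  have hS1 : ∑ a : Fin n, ∑ b : Fin n, ∑ c : Fin n, ∑ d : Fin n,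
      ((if a = b then (1:ℝ) else 0) * (if c = d then (1:ℝ) else 0))
        * (q' a i * q' b j * q' c k * q' d l)
      = (∑ p, q' p i * q' p j) * (∑ p, q' p k * q' p l) := by
    have s1 : ∀ a b c : Fin n, ∑ d : Fin n,
        ((if a = b then (1:ℝ) else 0) * (if c = d then (1:ℝ) else 0))
          * (q' a i * q' b j * q' c k * q' d l)
        = (if a = b then (1:ℝ) else 0) * (q' a i * q' b j * (q' c k * q' c l)) := by
      intro a b c
      rw [Finset.sum_congr rfl fun d _ =>
        show ((if a = b then (1:ℝ) else 0) * (if c = d then (1:ℝ) else 0))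
            * (q' a i * q' b j * q' c k * q' d l)
          = (if c = d then (1:ℝ) else 0)
            * ((if a = b then (1:ℝ) else 0) * (q' a i * q' b j * (q' c k * q' d l)))
          from by ring]
      exact collapse (fun d => (if a = b then (1:ℝ) else 0)
        * (q' a i * q' b j * (q' c k * q' d l))) c
    have s2 : ∀ a b : Fin n, ∑ c : Fin n,
        (if a = b then (1:ℝ) else 0) * (q' a i * q' b j * (q' c k * q' c l))
        = ((if a = b then (1:ℝ) else 0) * (q' a i * q' b j)) * (∑ p, q' p k * q' p l) := by
      intro a b
      rw [Finset.sum_congr rfl fun c _ =>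
        show (if a = b then (1:ℝ) else 0) * (q' a i * q' b j * (q' c k * q' c l))
          = ((if a = b then (1:ℝ) else 0) * (q' a i * q' b j)) * (q' c k * q' c l)
          from by ring]
      exact (Finset.mul_sum _ _ _).symm
    calc ∑ a : Fin n, ∑ b : Fin n, ∑ c : Fin n, ∑ d : Fin n,
        ((if a = b then (1:ℝ) else 0) * (if c = d then (1:ℝ) else 0))
          * (q' a i * q' b j * q' c k * q' d l)
        = ∑ a : Fin n, ∑ b : Fin n, ((if a = b then (1:ℝ) else 0)
            * (q' a i * q' b j)) * (∑ p, q' p k * q' p l) := by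
          refine Finset.sum_congr rfl fun a _ => Finset.sum_congr rfl fun b _ => ?_
          rw [Finset.sum_congr rfl fun c _ => s1 a b c, s2 a b]
      _ = ∑ a : Fin n, (q' a i * q' a j) * (∑ p, q' p k * q' p l) := by
          refine Finset.sum_congr rfl fun a _ => ?_
          rw [← Finset.sum_mul]
          rw [Finset.sum_congr rfl fun b _ =>
            show ((if a = b then (1:ℝ) else 0) * (q' a i * q' b j))
              = (if a = b then (1:ℝ) else 0) * (q' a i * q' b j) from rfl, s3gen a i j]
      _ = (∑ p, q' p i * q' p j) * (∑ p, q' p k * q' p l) := (Finset.sum_mul _ _ _).symm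
  have hS2 : ∑ a : Fin n, ∑ b : Fin n, ∑ c : Fin n, ∑ d : Fin n,
      ((if a = c then (1:ℝ) else 0) * (if b = d then (1:ℝ) else 0))
        * (q' a i * q' b j * q' c k * q' d l)
      = (∑ p, q' p i * q' p k) * (∑ p, q' p j * q' p l) := by
    have s1 : ∀ a b c : Fin n, ∑ d : Fin n,
        ((if a = c then (1:ℝ) else 0) * (if b = d then (1:ℝ) else 0))
          * (q' a i * q' b j * q' c k * q' d l)
        = (if a = c then (1:ℝ) else 0) * (q' a i * q' c k * (q' b j * q' b l)) := by
      intro a b c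
      rw [Finset.sum_congr rfl fun d _ =>
        show ((if a = c then (1:ℝ) else 0) * (if b = d then (1:ℝ) else 0))
            * (q' a i * q' b j * q' c k * q' d l)
          = (if b = d then (1:ℝ) else 0)
            * ((if a = c then (1:ℝ) else 0) * (q' a i * q' c k * (q' b j * q' d l)))
          from by ring]
      exact collapse (fun d => (if a = c then (1:ℝ) else 0)
        * (q' a i * q' c k * (q' b j * q' d l))) b
    have s2 : ∀ a b : Fin n, ∑ c : Fin n,
        (if a = c then (1:ℝ) else 0) * (q' a i * q' c k * (q' b j * q' b l))
        = (q' a i * q' a k) * (q' b j * q' b l) := by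
      intro a b
      rw [Finset.sum_congr rfl fun c _ =>
        show (if a = c then (1:ℝ) else 0) * (q' a i * q' c k * (q' b j * q' b l))
          = (if a = c then (1:ℝ) else 0) * (q' a i * q' c k * (q' b j * q' b l)) from rfl]
      exact collapse (fun c => q' a i * q' c k * (q' b j * q' b l)) a
    calc ∑ a : Fin n, ∑ b : Fin n, ∑ c : Fin n, ∑ d : Fin n,
        ((if a = c then (1:ℝ) else 0) * (if b = d then (1:ℝ) else 0))
          * (q' a i * q' b j * q' c k * q' d l)
        = ∑ a : Fin n, ∑ b : Fin n, (q' a i * q' a k) * (q' b j * q' b l) := by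
          refine Finset.sum_congr rfl fun a _ => Finset.sum_congr rfl fun b _ => ?_
          rw [Finset.sum_congr rfl fun c _ => s1 a b c, s2 a b]
      _ = ∑ a : Fin n, (q' a i * q' a k) * (∑ p, q' p j * q' p l) :=
          Finset.sum_congr rfl fun a _ => (Finset.mul_sum _ _ _).symm
      _ = (∑ p, q' p i * q' p k) * (∑ p, q' p j * q' p l) := (Finset.sum_mul _ _ _).symm
  have hS3 : ∑ a : Fin n, ∑ b : Fin n, ∑ c : Fin n, ∑ d : Fin n,
      ((if a = d then (1:ℝ) else 0) * (if b = c then (1:ℝ) else 0))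
        * (q' a i * q' b j * q' c k * q' d l)
      = (∑ p, q' p i * q' p l) * (∑ p, q' p j * q' p k) := by
    have s1 : ∀ a b c : Fin n, ∑ d : Fin n,
        ((if a = d then (1:ℝ) else 0) * (if b = c then (1:ℝ) else 0))
          * (q' a i * q' b j * q' c k * q' d l)
        = (if b = c then (1:ℝ) else 0) * (q' a i * q' a l * (q' b j * q' c k)) := by
      intro a b c
      rw [Finset.sum_congr rfl fun d _ =>
        show ((if a = d then (1:ℝ) else 0) * (if b = c then (1:ℝ) else 0))
            * (q' a i * q' b j * q' c k * q' d l)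
          = (if a = d then (1:ℝ) else 0)
            * ((if b = c then (1:ℝ) else 0) * (q' a i * q' d l * (q' b j * q' c k)))
          from by ring]
      exact collapse (fun d => (if b = c then (1:ℝ) else 0)
        * (q' a i * q' d l * (q' b j * q' c k))) a
    have s2 : ∀ a b : Fin n, ∑ c : Fin n,
        (if b = c then (1:ℝ) else 0) * (q' a i * q' a l * (q' b j * q' c k))
        = (q' a i * q' a l) * (q' b j * q' b k) := by
      intro a b
      rw [Finset.sum_congr rfl fun c _ =>
        show (if b = c then (1:ℝ) else 0) * (q' a i * q' a l * (q' b j * q' c k))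
          = (if b = c then (1:ℝ) else 0) * (q' a i * q' a l * (q' b j * q' c k)) from rfl]
      exact collapse (fun c => q' a i * q' a l * (q' b j * q' c k)) b
    calc ∑ a : Fin n, ∑ b : Fin n, ∑ c : Fin n, ∑ d : Fin n,
        ((if a = d then (1:ℝ) else 0) * (if b = c then (1:ℝ) else 0))
          * (q' a i * q' b j * q' c k * q' d l)
        = ∑ a : Fin n, ∑ b : Fin n, (q' a i * q' a l) * (q' b j * q' b k) := by
          refine Finset.sum_congr rfl fun a _ => Finset.sum_congr rfl fun b _ => ?_
          rw [Finset.sum_congr rfl fun c _ => s1 a b c, s2 a b]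
      _ = ∑ a : Fin n, (q' a i * q' a l) * (∑ p, q' p j * q' p k) :=
          Finset.sum_congr rfl fun a _ => (Finset.mul_sum _ _ _).symm
      _ = (∑ p, q' p i * q' p l) * (∑ p, q' p j * q' p k) := (Finset.sum_mul _ _ _).symm
  rw [hS1, hS2, hS3, hQ i j, hQ k l, hQ i k, hQ j l, hQ i l, hQ j k, hconst]
  show Cs σ φ * _ + (Cs σ φ * _ + Cs σ φ * _) = Cs σ φ * _
  ring
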